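/- arXiv:1207.3569 — 2 statements merged into one kernel-verified Lean document; each statement's English description precedes it below -/
import Mathlib

section
/- With notation as in the ratio ergodic setup, for φ in a countable generating set Φ witnessing extreme asymptotic invariance of F = {F_n} and u ∈ L¹(B), set u_φ(b) = u(b) − u(φ(b))D(φ(b),b). Then the sums S_n[u_φ](b) = Σ_{b' ∈ F_n(b)} u_φ(b')D(b',b) are eventually equal to 0 for a.e. b (indeed S_n[u_φ](b) = 0 for all n > N(φ,b)), and E_ν[u_φ | R] = 0. -/
open MeasureTheory ENNReal Filter

variable {B : Type*}

/-- The σ-algebra of `R`-invariant (saturated) measurable sets. -/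
def invSigma [m : MeasurableSpace B] (R : B → B → Prop) : MeasurableSpace B where
  MeasurableSet' A := MeasurableSet A ∧ ∀ x y, R x y → (x ∈ A ↔ y ∈ A)
  measurableSet_empty := ⟨MeasurableSet.empty, by simp⟩
  measurableSet_compl := fun A hA => ⟨hA.1.compl, fun x y h => by
    simp only [Set.mem_compl_iff, hA.2 x y h]⟩
  measurableSet_iUnion := fun f hf => ⟨MeasurableSet.iUnion fun i => (hf i).1, fun x y h => by
    simp only [Set.mem_iUnion]
    exact exists_congr fun i => (hf i).2 x y h⟩

theorem invSigma_le [m : MeasurableSpace B] (R : B → B → Prop) : invSigma R ≤ m :=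
  fun _ hs => hs.1

/-- The defining "mass transport" property of the Radon–Nikodym cocycle `D = dM/dM̌` of a
discrete quasi-invariant equivalence relation: for every nonnegative `G` supported on `R`,
`∫ Σ_{y} G(x,y) dν(x) = ∫ Σ_{x} G(x,y) D(x,y) dν(y)`. -/
def MassTransport [MeasurableSpace B] (ν : Measure B) (R : B → B → Prop) (D : B → B → ℝ) : Prop :=
  ∀ G : B → B → ℝ≥0∞, (∀ x y, ¬R x y → G x y = 0) →
    ∫⁻ x, ∑' y, G x y ∂ν = ∫⁻ y, ∑' x, G x y * ENNReal.ofReal (D x y) ∂ν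

/-- The cocycle identity `D(x,z) = D(x,y) D(y,z)`. -/
def IsCocycle (R : B → B → Prop) (D : B → B → ℝ) : Prop :=
  ∀ x y z, R x y → R y z → D x z = D x y * D y z

/-- for `φ` in a countable generating set witnessing the extreme asymptotic
invariance of `F = {F_n}` and `u ∈ L¹`, setting `u_φ(b) = u(b) − u(φ(b)) D(φ(b),b)`, the sums
`S_n[u_φ](b) = Σ_{b' ∈ F_n(b)} u_φ(b') D(b',b)` vanish for all `n > N(φ,b)`, and
`E_ν[u_φ | R] = 0`. -/
theorem stmt12 [MeasurableSpace B] [DecidableEq B] (ν : Measure B) (R : B → B → Prop)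
    (hR : Equivalence R) (hcount : ∀ b, {b' | R b b'}.Countable)
    (D : B → B → ℝ) (hD0 : ∀ x y, 0 ≤ D x y)
    (hDmeas : Measurable fun p : B × B => D p.1 p.2)
    (hMT : MassTransport ν R D) (hcoc : IsCocycle R D)
    [SigmaFinite (ν.trim (invSigma_le R))]
    (F : ℕ → B → Finset B) (hsub : ∀ n b, ∀ b' ∈ F n b, R b b')
    (φ : Equiv.Perm B) (hφ : Measurable ⇑φ) (hφs : Measurable ⇑φ.symm)
    (hgraph : ∀ b, R b (φ b))
    (hinv : ∀ b, ∃ N, ∀ n, N < n → (F n b).image ⇑φ = F n b)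
    (u : B → ℝ) (hu : Integrable u ν) :
    (∀ b, ∃ N, ∀ n, N < n →
      ∑ b' ∈ F n b, (u b' - u (φ b') * D (φ b') b') * D b' b = 0) ∧
    ν[(fun b => u b - u (φ b) * D (φ b) b) | invSigma R] =ᵐ[ν] 0 := by
  classical
  -- Part 1: the combinatorial vanishing of the sums
  have part1 : ∀ b, ∃ N, ∀ n, N < n →
      ∑ b' ∈ F n b, (u b' - u (φ b') * D (φ b') b') * D b' b = 0 := by
    intro b
    obtain ⟨N, hN⟩ := hinv b
    refine ⟨N, fun n hn => ?_⟩
    have himg := hN n hn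
    have key : ∀ b' ∈ F n b, u (φ b') * D (φ b') b' * D b' b = u (φ b') * D (φ b') b := by
      intro b' hb'
      have h1 : R (φ b') b' := hR.symm (hgraph b')
      have h2 : R b' b := hR.symm (hsub n b b' hb')
      rw [mul_assoc, ← hcoc _ _ _ h1 h2]
    calc ∑ b' ∈ F n b, (u b' - u (φ b') * D (φ b') b') * D b' b
        = ∑ b' ∈ F n b, u b' * D b' b - ∑ b' ∈ F n b, u (φ b') * D (φ b') b := by
          rw [← Finset.sum_sub_distrib]
          exact Finset.sum_congr rfl fun b' hb' => by rw [sub_mul, key b' hb']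
      _ = 0 := by
          rw [sub_eq_zero]
          conv_lhs => rw [← himg]
          rw [Finset.sum_image (fun x _ y _ h => φ.injective h)]
  refine ⟨part1, ?_⟩
  -- Transport lemma from mass transport
  have transport : ∀ f : B → ℝ≥0∞,
      ∫⁻ y, f (φ y) * ENNReal.ofReal (D (φ y) y) ∂ν = ∫⁻ x, f x ∂ν := by
    intro f
    have h0 : ∀ x y, ¬R x y → (if x = φ y then f x else 0) = 0 := by
      intro x y hxy
      split_ifs with h
      · exact absurd (h ▸ hR.symm (hgraph y)) hxy
      · rfl
    have := hMT (fun x y => if x = φ y then f x else 0) h0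
    have hL : ∀ x, (∑' y, if x = φ y then f x else 0) = f x := by
      intro x
      have : ∀ y, (if x = φ y then f x else 0) = (if y = φ.symm x then f x else 0) := by
        intro y
        refine if_congr ⟨fun h => ?_, fun h => ?_⟩ rfl rfl
        · simp [h]
        · simp [h]
      rw [tsum_congr this, tsum_ite_eq]
    have hRt : ∀ y, (∑' x, (if x = φ y then f x else 0) * ENNReal.ofReal (D x y))
        = f (φ y) * ENNReal.ofReal (D (φ y) y) := by
      intro y
      have : ∀ x, (if x = φ y then f x else 0) * ENNReal.ofReal (D x y)
          = (if x = φ y then f (φ y) * ENNReal.ofReal (D (φ y) y) else 0) := by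
        intro x
        split_ifs with h
        · rw [h]
        · rw [zero_mul]
      rw [tsum_congr this, tsum_ite_eq]
    calc ∫⁻ y, f (φ y) * ENNReal.ofReal (D (φ y) y) ∂ν
        = ∫⁻ y, ∑' x, (if x = φ y then f x else 0) * ENNReal.ofReal (D x y) ∂ν :=
          lintegral_congr fun y => (hRt y).symm
      _ = ∫⁻ x, ∑' y, if x = φ y then f x else 0 ∂ν := this.symm
      _ = ∫⁻ x, f x ∂ν := lintegral_congr hL
  -- measurable representative
  set u' : B → ℝ := hu.1.mk u with hu'def
  have hu'm : StronglyMeasurable u' := hu.1.stronglyMeasurable_mk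
  have hu'ae : u =ᵐ[ν] u' := hu.1.ae_eq_mk
  set T : Set B := toMeasurable ν {x | u x ≠ u' x} with hTdef
  have hTm : MeasurableSet T := measurableSet_toMeasurable _ _
  have hT0 : ν T = 0 := by
    rw [hTdef, measure_toMeasurable]
    exact hu'ae
  -- a.e. either φ b ∉ T or D (φ b) b = 0
  have hae : ∀ᵐ b ∂ν, φ b ∉ T ∨ D (φ b) b = 0 := by
    have h1 : ∫⁻ y, T.indicator (fun _ => (1:ℝ≥0∞)) (φ y) * ENNReal.ofReal (D (φ y) y) ∂ν
        = 0 := by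
      rw [transport (T.indicator fun _ => 1)]
      rw [lintegral_indicator hTm]
      simp [hT0]
    have h2 := (lintegral_eq_zero_iff' (by
      refine AEMeasurable.mul ?_ ?_
      · exact ((measurable_one.indicator hTm).comp hφ).aemeasurable
      · exact (ENNReal.measurable_ofReal.comp (hDmeas.comp (hφ.prodMk measurable_id))).aemeasurable)).mp h1
    filter_upwards [h2] with b hb
    by_cases hT : φ b ∈ T
    · right
      simp only [Set.indicator_of_mem hT] at hb
      rw [one_mul] at hb
      have := ENNReal.ofReal_eq_zero.mp hb
      linarith [hD0 (φ b) b]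
    · exact Or.inl hT
  have haeq : (fun b => u (φ b) * D (φ b) b) =ᵐ[ν] (fun b => u' (φ b) * D (φ b) b) := by
    filter_upwards [hae] with b hb
    rcases hb with hb | hb
    · have : u (φ b) = u' (φ b) := by
        by_contra h
        exact hb (subset_toMeasurable ν _ h)
      rw [this]
    · rw [hb, mul_zero, mul_zero]
  have hDm : Measurable fun b => D (φ b) b := hDmeas.comp (hφ.prodMk measurable_id)
  have hgm : Measurable fun b => u' (φ b) * D (φ b) b :=
    (hu'm.measurable.comp hφ).mul hDm
  -- enorm computation
  have henorm : ∀ v : B → ℝ, ∀ b, (‖v (φ b) * D (φ b) b‖₊ : ℝ≥0∞)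
      = (‖v (φ b)‖₊ : ℝ≥0∞) * ENNReal.ofReal (D (φ b) b) := by
    intro v b
    rw [nnnorm_mul, ENNReal.coe_mul]
    congr 1
    rw [← Real.enorm_eq_ofReal (hD0 _ _), enorm_eq_nnnorm]
  -- integrability of the transported term
  have hui : Integrable (fun b => u (φ b) * D (φ b) b) ν := by
    refine ⟨⟨fun b => u' (φ b) * D (φ b) b, hgm.stronglyMeasurable, haeq⟩, ?_⟩
    show (∫⁻ b, (‖u (φ b) * D (φ b) b‖₊ : ℝ≥0∞) ∂ν) < ⊤
    calc ∫⁻ b, (‖u (φ b) * D (φ b) b‖₊ : ℝ≥0∞) ∂ν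
        = ∫⁻ b, (‖u' (φ b)‖₊ : ℝ≥0∞) * ENNReal.ofReal (D (φ b) b) ∂ν := by
          refine lintegral_congr_ae ?_
          filter_upwards [haeq] with b hb
          rw [hb, henorm u' b]
      _ = ∫⁻ x, (‖u' x‖₊ : ℝ≥0∞) ∂ν := transport (fun x => (‖u' x‖₊ : ℝ≥0∞))
      _ = ∫⁻ x, (‖u x‖₊ : ℝ≥0∞) ∂ν := by
          refine lintegral_congr_ae ?_
          filter_upwards [hu'ae] with b hb
          rw [hb]
      _ < ⊤ := hu.2
  have hint : Integrable (fun b => u b - u (φ b) * D (φ b) b) ν := hu.sub hui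
  -- the set-integral identity on invariant sets
  have hset : ∀ s : Set B, MeasurableSet[invSigma R] s → ν s < ⊤ →
      ∫ b in s, (u b - u (φ b) * D (φ b) b) ∂ν = 0 := by
    intro s hs hνs
    obtain ⟨hsm, hsinv⟩ := hs
    have hmem : ∀ b, φ b ∈ s ↔ b ∈ s := fun b => (hsinv b (φ b) (hgraph b)).symm
    have key : ∫ b in s, u' (φ b) * D (φ b) b ∂ν = ∫ b in s, u' b ∂ν := by
      have hint1 : Integrable (fun b => u' (φ b) * D (φ b) b) (ν.restrict s) :=
        ((hui.congr haeq).restrict (s := s))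
      have hint2 : Integrable u' (ν.restrict s) := ((hu.congr hu'ae).restrict (s := s))
      rw [integral_eq_lintegral_pos_part_sub_lintegral_neg_part hint1,
          integral_eq_lintegral_pos_part_sub_lintegral_neg_part hint2]
      have hpos : ∫⁻ b in s, ENNReal.ofReal (u' (φ b) * D (φ b) b) ∂ν
          = ∫⁻ b in s, ENNReal.ofReal (u' b) ∂ν := by
        rw [← lintegral_indicator hsm, ← lintegral_indicator hsm]
        have heq : ∀ b, s.indicator (fun b => ENNReal.ofReal (u' (φ b) * D (φ b) b)) b
            = s.indicator (fun x => ENNReal.ofReal (u' x)) (φ b)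
              * ENNReal.ofReal (D (φ b) b) := by
          intro b
          by_cases hb : b ∈ s
          · rw [Set.indicator_of_mem hb, Set.indicator_of_mem ((hmem b).mpr hb),
              ENNReal.ofReal_mul' (hD0 _ _)]
          · rw [Set.indicator_of_notMem hb,
              Set.indicator_of_notMem (fun h => hb ((hmem b).mp h)), zero_mul]
        rw [lintegral_congr heq, transport]
      have hneg : ∫⁻ b in s, ENNReal.ofReal (-(u' (φ b) * D (φ b) b)) ∂ν
          = ∫⁻ b in s, ENNReal.ofReal (-u' b) ∂ν := by
        rw [← lintegral_indicator hsm, ← lintegral_indicator hsm]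
        have heq : ∀ b, s.indicator (fun b => ENNReal.ofReal (-(u' (φ b) * D (φ b) b))) b
            = s.indicator (fun x => ENNReal.ofReal (-u' x)) (φ b)
              * ENNReal.ofReal (D (φ b) b) := by
          intro b
          by_cases hb : b ∈ s
          · rw [Set.indicator_of_mem hb, Set.indicator_of_mem ((hmem b).mpr hb),
              ← ENNReal.ofReal_mul' (hD0 _ _), neg_mul]
          · rw [Set.indicator_of_notMem hb,
              Set.indicator_of_notMem (fun h => hb ((hmem b).mp h)), zero_mul]
        rw [lintegral_congr heq, transport]
      rw [hpos, hneg]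
    have e1 : ∫ b in s, u (φ b) * D (φ b) b ∂ν = ∫ b in s, u b ∂ν := by
      calc ∫ b in s, u (φ b) * D (φ b) b ∂ν
          = ∫ b in s, u' (φ b) * D (φ b) b ∂ν :=
            integral_congr_ae (ae_restrict_of_ae haeq)
        _ = ∫ b in s, u' b ∂ν := key
        _ = ∫ b in s, u b ∂ν := integral_congr_ae (ae_restrict_of_ae hu'ae.symm)
    rw [integral_sub (hu.restrict (s := s)) (hui.restrict (s := s)), e1, sub_self]
  -- conclude via the characterization of conditional expectation
  have hzero : (0 : B → ℝ) =ᵐ[ν]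
      ν[(fun b => u b - u (φ b) * D (φ b) b) | invSigma R] := by
    refine ae_eq_condExp_of_forall_setIntegral_eq (invSigma_le R) hint
      (fun s _ _ => integrableOn_zero) (fun s hs hνs => ?_) ?_
    · rw [hset s hs hνs]
      simp
    · exact stronglyMeasurable_zero.aestronglyMeasurable
  exact hzero.symm
end

section
/- Cocycle lift preserves extreme properties: Let R be a discrete equivalence relation on B, α: R → Γ a Borel cocycle into a group Γ acting on a standard space X, and R^α the relation on B×X given by (b,x) ∼ (b',x') iff (b,b') ∈ R and α(b',b)x = x'. Given a sequence of subset functions F = {F_n} for R, define F^α_n(b,x) = {(b', α(b',b)x) : b' ∈ F_n(b)}. If F is anchored then F^α is anchored; if F satisfies the extreme Besicovich property then so does F^α; if F is extremely asymptotically invariant then so is F^α. -/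
open MeasureTheory Filter

variable {B X Γ : Type*}

/-- The lifted equivalence relation `R^α` on `B × X`:
`(b,x) ∼ (b',x')` iff `(b,b') ∈ R` and `α(b',b)·x = x'`. -/
def RLift [Group Γ] [MulAction Γ X] (R : B → B → Prop) (α : B → B → Γ) :
    B × X → B × X → Prop :=
  fun p q => R p.1 q.1 ∧ α q.1 p.1 • p.2 = q.2

/-- The lifted subset functions `F^α_n(b,x) = {(b', α(b',b)·x) : b' ∈ F_n(b)}`. -/
def FLift [Group Γ] [MulAction Γ X] [DecidableEq B] [DecidableEq X]
    (α : B → B → Γ) (F : ℕ → B → Finset B) : ℕ → B × X → Finset (B × X) :=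
  fun n p => (F n p.1).image fun b' => (b', α b' p.1 • p.2)

section Aux

variable [Group Γ] [MulAction Γ X]

lemma alpha_self {R : B → B → Prop} (hR : Equivalence R) {α : B → B → Γ}
    (hα : ∀ b₁ b₂ b₃, R b₁ b₂ → R b₂ b₃ → α b₁ b₂ * α b₂ b₃ = α b₁ b₃)
    (b : B) : α b b = 1 := by
  have h := hα b b b (hR.refl b) (hR.refl b)
  have : α b b * α b b = α b b * 1 := by rw [mul_one]; exact h
  exact mul_left_cancel this

/-- The subgroup of permutations moving points within their `R`-class. -/
def permH (R : B → B → Prop) (hR : Equivalence R) : Subgroup (Equiv.Perm B) where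
  carrier := {φ | ∀ b, R b (φ b)}
  one_mem' := fun b => hR.refl b
  mul_mem' := fun {φ ψ} hφ hψ b => hR.trans (hψ b) (hφ (ψ b))
  inv_mem' := fun {φ} hφ b => hR.symm (by simpa using hφ (φ⁻¹ b))

/-- Lift of a class-preserving permutation to `B × X`. -/
def liftPerm {R : B → B → Prop} (hR : Equivalence R) {α : B → B → Γ}
    (hα : ∀ b₁ b₂ b₃, R b₁ b₂ → R b₂ b₃ → α b₁ b₂ * α b₂ b₃ = α b₁ b₃)
    (φ : permH R hR) : Equiv.Perm (B × X) where
  toFun p := (φ.1 p.1, α (φ.1 p.1) p.1 • p.2)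
  invFun p := (φ.1⁻¹ p.1, α (φ.1⁻¹ p.1) p.1 • p.2)
  left_inv p := by
    have h1 : φ.1⁻¹ (φ.1 p.1) = p.1 := Equiv.symm_apply_apply φ.1 p.1
    have hr : R p.1 (φ.1 p.1) := φ.2 p.1
    ext
    · exact h1
    · show α (φ.1⁻¹ (φ.1 p.1)) (φ.1 p.1) • α (φ.1 p.1) p.1 • p.2 = p.2
      rw [h1, smul_smul, hα _ _ _ hr (hR.symm hr), alpha_self hR hα, one_smul]
  right_inv p := by
    have h1 : φ.1 (φ.1⁻¹ p.1) = p.1 := Equiv.apply_symm_apply φ.1 p.1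
    have hr : R p.1 (φ.1⁻¹ p.1) := (permH R hR).inv_mem φ.2 p.1
    ext
    · exact h1
    · show α (φ.1 (φ.1⁻¹ p.1)) (φ.1⁻¹ p.1) • α (φ.1⁻¹ p.1) p.1 • p.2 = p.2
      rw [h1, smul_smul, hα _ _ _ hr (hR.symm hr), alpha_self hR hα, one_smul]

/-- The lift as a group homomorphism. -/
def liftHom {R : B → B → Prop} (hR : Equivalence R) {α : B → B → Γ}
    (hα : ∀ b₁ b₂ b₃, R b₁ b₂ → R b₂ b₃ → α b₁ b₂ * α b₂ b₃ = α b₁ b₃) :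
    permH R hR →* Equiv.Perm (B × X) where
  toFun := liftPerm (X := X) hR hα
  map_one' := by
    ext p
    · rfl
    · show α _ _ • p.2 = p.2
      rw [show α ((1 : permH R hR).1 p.1) p.1 = α p.1 p.1 from rfl,
        alpha_self hR hα, one_smul]
  map_mul' φ ψ := by
    ext p
    · rfl
    · show α ((φ.1 * ψ.1) p.1) p.1 • p.2 =
        α (φ.1 (ψ.1 p.1)) (ψ.1 p.1) • α (ψ.1 p.1) p.1 • p.2
      have h1 : R (ψ.1 p.1) (φ.1 (ψ.1 p.1)) := φ.2 _
      have h2 : R p.1 (ψ.1 p.1) := ψ.2 _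
      rw [smul_smul, hα _ _ _ (hR.symm h1) (hR.symm h2)]
      rfl

lemma liftHom_apply {R : B → B → Prop} (hR : Equivalence R) {α : B → B → Γ}
    (hα : ∀ b₁ b₂ b₃, R b₁ b₂ → R b₂ b₃ → α b₁ b₂ * α b₂ b₃ = α b₁ b₃)
    (φ : permH R hR) (p : B × X) :
    liftHom (X := X) hR hα φ p = (φ.1 p.1, α (φ.1 p.1) p.1 • p.2) := rfl

end Aux

/-- the cocycle lift preserves the extreme properties: if `F` is anchored,
(resp. satisfies the extreme Besicovich property, resp. is extremely asymptotically
invariant) then so is `F^α` with respect to `R^α`. -/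
theorem stmt16 [Group Γ] [MulAction Γ X] [DecidableEq B] [DecidableEq X]
    (R : B → B → Prop) (hR : Equivalence R)
    (α : B → B → Γ)
    (hα : ∀ b₁ b₂ b₃, R b₁ b₂ → R b₂ b₃ → α b₁ b₂ * α b₂ b₃ = α b₁ b₃)
    (F : ℕ → B → Finset B) (hsub : ∀ n b, ∀ b' ∈ F n b, R b b') :
    -- anchored is preserved
    ((∀ n b, b ∈ F n b) → ∀ n, ∀ p : B × X, p ∈ FLift α F n p) ∧
    -- the extreme Besicovich property is preserved
    ((∀ b b', R b b' →
        (∀ n, F n b = F n b' ∨ Disjoint (F n b : Set B) (F n b' : Set B)) ∧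
        ∃ N, ∀ n ≥ N, F n b = F n b') →
      ∀ p q : B × X, RLift R α p q →
        (∀ n, FLift α F n p = FLift α F n q ∨
          Disjoint (FLift α F n p : Set (B × X)) (FLift α F n q : Set (B × X))) ∧
        ∃ N, ∀ n ≥ N, FLift α F n p = FLift α F n q) ∧
    -- extreme asymptotic invariance is preserved
    (∀ Φ : Set (Equiv.Perm B), Φ.Countable →
      (∀ φ ∈ Φ, ∀ b, R b (φ b)) →
      (∀ x y, R x y → ∃ ψ ∈ Subgroup.closure Φ, ψ x = y) →
      (∀ φ ∈ Φ, ∀ b, ∃ N, ∀ n, N < n → (F n b).image ⇑φ = F n b) →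
      (∀ b, Tendsto (fun n => (F n b).card) atTop atTop) →
      ∃ Ψ : Set (Equiv.Perm (B × X)), Ψ.Countable ∧
        (∀ ψ ∈ Ψ, ∀ p : B × X, RLift R α p (ψ p)) ∧
        (∀ p q : B × X, RLift R α p q → ∃ ψ ∈ Subgroup.closure Ψ, ψ p = q) ∧
        (∀ ψ ∈ Ψ, ∀ p : B × X, ∃ N, ∀ n, N < n → (FLift α F n p).image ⇑ψ = FLift α F n p) ∧
        (∀ p : B × X, Tendsto (fun n => (FLift α F n p).card) atTop atTop)) := by
  have key : ∀ p q : B × X, RLift R α p q → ∀ n,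
      FLift α F n q = (F n q.1).image (fun c => (c, α c p.1 • p.2)) := by
    intro p q hpq n
    apply Finset.image_congr
    intro c hc
    have hc' : R q.1 c := hsub n q.1 c hc
    have : α c q.1 • q.2 = α c p.1 • p.2 := by
      rw [← hpq.2, smul_smul, hα _ _ _ (hR.symm hc') (hR.symm hpq.1)]
    simp [this]
  have jinj : ∀ (b : B) (x : X), Function.Injective (fun c : B => (c, α c b • x)) := by
    intro b x c c' h
    exact congrArg Prod.fst h
  refine ⟨?_, ?_, ?_⟩
  · -- anchored
    intro h n p
    simp only [FLift, Finset.mem_image]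
    exact ⟨p.1, h n p.1, by rw [alpha_self hR hα, one_smul]⟩
  · -- Besicovich
    intro hB p q hpq
    have hq := key p q hpq
    have hp := key p p ⟨hR.refl p.1, by rw [alpha_self hR hα, one_smul]⟩
    obtain ⟨h1, N, h2⟩ := hB p.1 q.1 hpq.1
    constructor
    · intro n
      rcases h1 n with h | h
      · left; rw [hp n, hq n, h]
      · right
        rw [hp n, hq n, Set.disjoint_left]
        rintro a ha hb
        simp only [Finset.coe_image, Set.mem_image, Finset.mem_coe] at ha hb
        obtain ⟨c, hc, rfl⟩ := ha
        obtain ⟨c', hc', he⟩ := hb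
        have : c' = c := congrArg Prod.fst he
        exact Set.disjoint_left.1 h hc (this ▸ hc')
    · exact ⟨N, fun n hn => by rw [hp n, hq n, h2 n hn]⟩
  · -- asymptotic invariance
    intro Φ hΦc hΦR hΦgen hΦinv hcard
    refine ⟨liftHom (X := X) hR hα '' {φ : permH R hR | ↑φ ∈ Φ}, ?_, ?_, ?_, ?_, ?_⟩
    · exact (hΦc.preimage Subtype.coe_injective).image _
    · rintro ψ ⟨φ, hφ, rfl⟩ p
      rw [liftHom_apply]
      exact ⟨φ.2 p.1, rfl⟩
    · intro p q hpq
      obtain ⟨ψ, hψ, hψpq⟩ := hΦgen p.1 q.1 hpq.1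
      have main : ∀ x ∈ Subgroup.closure Φ,
          ∃ h : x ∈ permH R hR, liftHom (X := X) hR hα ⟨x, h⟩ ∈
            Subgroup.closure (liftHom (X := X) hR hα '' {φ : permH R hR | ↑φ ∈ Φ}) := by
        intro x hx
        induction hx using Subgroup.closure_induction with
        | mem y hy =>
          exact ⟨hΦR y hy, Subgroup.subset_closure ⟨⟨y, hΦR y hy⟩, hy, rfl⟩⟩
        | one =>
          refine ⟨(permH R hR).one_mem, ?_⟩
          have e : (⟨1, (permH R hR).one_mem⟩ : permH R hR) = 1 := rfl
          rw [e, map_one]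
          exact one_mem _
        | mul y z _ _ hy hz =>
          obtain ⟨h1, hm1⟩ := hy
          obtain ⟨h2, hm2⟩ := hz
          refine ⟨(permH R hR).mul_mem h1 h2, ?_⟩
          have e : (⟨y * z, (permH R hR).mul_mem h1 h2⟩ : permH R hR) =
              ⟨y, h1⟩ * ⟨z, h2⟩ := rfl
          rw [e, map_mul]
          exact mul_mem hm1 hm2
        | inv y _ hy =>
          obtain ⟨h1, hm1⟩ := hy
          refine ⟨(permH R hR).inv_mem h1, ?_⟩
          have e : (⟨y⁻¹, (permH R hR).inv_mem h1⟩ : permH R hR) = (⟨y, h1⟩)⁻¹ := rfl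
          rw [e, map_inv]
          exact inv_mem hm1
      obtain ⟨hmem, hcl⟩ := main ψ hψ
      refine ⟨liftHom (X := X) hR hα ⟨ψ, hmem⟩, hcl, ?_⟩
      rw [liftHom_apply]
      show (ψ p.1, α (ψ p.1) p.1 • p.2) = q
      rw [hψpq]
      exact Prod.ext rfl hpq.2
    · rintro ψ ⟨φ, hφ, rfl⟩ p
      obtain ⟨N, hN⟩ := hΦinv φ.1 hφ p.1
      refine ⟨N, fun n hn => ?_⟩
      have e : (FLift α F n p).image (liftHom (X := X) hR hα φ) =
          ((F n p.1).image φ.1).image (fun c => (c, α c p.1 • p.2)) := by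
        rw [FLift, Finset.image_image, Finset.image_image]
        apply Finset.image_congr
        intro c hc
        simp only [Function.comp_apply]
        rw [liftHom_apply]
        have h1 : R c (φ.1 c) := φ.2 c
        have h2 : R p.1 c := hsub n p.1 c hc
        show (φ.1 c, α (φ.1 c) c • α c p.1 • p.2) = (φ.1 c, α (φ.1 c) p.1 • p.2)
        rw [smul_smul, hα _ _ _ (hR.symm h1) (hR.symm h2)]
      rw [e, hN n hn]
      rfl
    · intro p
      have e : ∀ n, (FLift α F n p).card = (F n p.1).card := fun n =>
        Finset.card_image_of_injective _ (jinj p.1 p.2)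
      simpa [e] using hcard p.1
end
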